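/- Let H_N be the group with presentation ⟨ {x_m}_{m∈ℤ} ∪ {y_n}_{n≥N} | y_n = x_{n+1}⁻¹ y_{n+1}⁻¹ x_{n+1} for all n ≥ N ⟩. The quotient of H_N by the normal closure of {x_n : n > N} is isomorphic to the free group on the set {x_m}_{m≤N} ∪ {y_N}. Consequently, the set {x_m}_{m≤N} ∪ {y_N} freely generates a free subgroup of H_N. -/

import Mathlib

/-- Relators `y_n⁻¹ x_{n+1}⁻¹ y_{n+1}⁻¹ x_{n+1}` for `n ≥ N`, where `x_m` is
`Sum.inl m` (`m ∈ ℤ`) and `y_n` is `Sum.inr n` (`n ≥ N`). -/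
def relsHN (N : ℤ) : Set (FreeGroup (ℤ ⊕ {n : ℤ // N ≤ n})) :=
  {r | ∃ (n : ℤ) (hn : N ≤ n),
    r = (FreeGroup.of (Sum.inr ⟨n, hn⟩))⁻¹ * (FreeGroup.of (Sum.inl (n + 1)))⁻¹ *
      (FreeGroup.of (Sum.inr ⟨n + 1, by omega⟩))⁻¹ * FreeGroup.of (Sum.inl (n + 1))}

/-- The group `H_N = ⟨ x_m (m ∈ ℤ), y_n (n ≥ N) ∣ y_n = x_{n+1}⁻¹ y_{n+1}⁻¹ x_{n+1}, n ≥ N ⟩`. -/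
def GroupHN (N : ℤ) := PresentedGroup (relsHN N)

noncomputable instance (N : ℤ) : Group (GroupHN N) := by unfold GroupHN; infer_instance

/-- The generator `x_m` of `H_N`. -/
noncomputable def xgN (N : ℤ) (m : ℤ) : GroupHN N := PresentedGroup.of (Sum.inl m)

/-- The generator `y_n` of `H_N` (for `n ≥ N`). -/
noncomputable def ygN (N : ℤ) (n : {n : ℤ // N ≤ n}) : GroupHN N := PresentedGroup.of (Sum.inr n)

noncomputable section AuxHN

variable (N : ℤ)

/-- Target map on generators for the retraction. -/
noncomputable def retFun : ℤ ⊕ {n : ℤ // N ≤ n} → FreeGroup ({m : ℤ // m ≤ N} ⊕ Unit)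
  | Sum.inl m => if h : m ≤ N then FreeGroup.of (Sum.inl ⟨m, h⟩) else 1
  | Sum.inr ⟨n, _⟩ => (FreeGroup.of (Sum.inr ())) ^ ((-1 : ℤ) ^ (n - N).toNat)

lemma retFun_rels : ∀ r ∈ relsHN N, FreeGroup.lift (retFun N) r = 1 := by
  rintro r ⟨n, hn, rfl⟩
  simp only [map_mul, map_inv, FreeGroup.lift_apply_of]
  have hx : retFun N (Sum.inl (n + 1)) = 1 := by
    simp [retFun, show ¬ n + 1 ≤ N by omega]
  have h1 : retFun N (Sum.inr ⟨n, hn⟩)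
      = (FreeGroup.of (Sum.inr ())) ^ ((-1 : ℤ) ^ (n - N).toNat) := rfl
  have h2 : retFun N (Sum.inr ⟨n + 1, by omega⟩)
      = (FreeGroup.of (Sum.inr ())) ^ ((-1 : ℤ) ^ (n + 1 - N).toNat) := rfl
  have ht : (n + 1 - N).toNat = (n - N).toNat + 1 := by omega
  rw [hx, h1, h2, ht, inv_one, mul_one, mul_one, pow_succ, ← zpow_neg, ← zpow_neg, ← zpow_add]
  have hz : -(-1 : ℤ) ^ (n - N).toNat + -((-1 : ℤ) ^ (n - N).toNat * -1) = 0 := by ring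
  rw [hz, zpow_zero]

/-- The retraction `H_N →* FreeGroup ({m ≤ N} ⊕ Unit)`. -/
noncomputable def retHN : GroupHN N →* FreeGroup ({m : ℤ // m ≤ N} ⊕ Unit) :=
  PresentedGroup.toGroup (retFun_rels N)

lemma retHN_of (a : ℤ ⊕ {n : ℤ // N ≤ n}) :
    retHN N (PresentedGroup.of a : GroupHN N) = retFun N a :=
  PresentedGroup.toGroup.of (retFun_rels N)

/-- The map from the free group into `H_N`. -/
noncomputable def phiHN : FreeGroup ({m : ℤ // m ≤ N} ⊕ Unit) →* GroupHN N :=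
  FreeGroup.lift (fun a => match a with
    | Sum.inl m => xgN N m
    | Sum.inr _ => ygN N ⟨N, le_refl N⟩)

lemma phiHN_inl (m : {m : ℤ // m ≤ N}) : phiHN N (FreeGroup.of (Sum.inl m)) = xgN N m := by
  simp [phiHN]

lemma phiHN_inr (u : Unit) :
    phiHN N (FreeGroup.of (Sum.inr u)) = ygN N ⟨N, le_refl N⟩ := by
  simp [phiHN]

lemma retHN_comp_phiHN : (retHN N).comp (phiHN N) = MonoidHom.id _ := by
  apply FreeGroup.ext_hom
  rintro (⟨m, hm⟩ | u)
  · rw [MonoidHom.comp_apply, MonoidHom.id_apply, phiHN_inl, xgN, retHN_of]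
    simp [retFun, hm]
  · rw [MonoidHom.comp_apply, MonoidHom.id_apply, phiHN_inr, ygN, retHN_of]
    simp [retFun]

lemma rel_in_HN (n : ℤ) (hn : N ≤ n) :
    ygN N ⟨n, hn⟩ = (xgN N (n + 1))⁻¹ * (ygN N ⟨n + 1, by omega⟩)⁻¹ * xgN N (n + 1) := by
  have h : PresentedGroup.mk (relsHN N)
      ((FreeGroup.of (Sum.inr ⟨n, hn⟩))⁻¹ * (FreeGroup.of (Sum.inl (n + 1)))⁻¹ *
        (FreeGroup.of (Sum.inr ⟨n + 1, by omega⟩))⁻¹ * FreeGroup.of (Sum.inl (n + 1))) = 1 :=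
    (QuotientGroup.eq_one_iff _).2 (Subgroup.subset_normalClosure ⟨n, hn, rfl⟩)
  simp only [map_mul, map_inv] at h
  rw [mul_assoc, mul_assoc,
    ← mul_assoc ((PresentedGroup.mk (relsHN N)) (FreeGroup.of (Sum.inl (n + 1))))⁻¹] at h
  exact inv_mul_eq_one.mp h

end AuxHN

theorem groupHN_quotient_free (N : ℤ) :
    Nonempty ((GroupHN N ⧸ Subgroup.normalClosure {g : GroupHN N | ∃ n : ℤ, N < n ∧ g = xgN N n})
        ≃* FreeGroup ({m : ℤ // m ≤ N} ⊕ Unit)) ∧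
    ∃ φ : FreeGroup ({m : ℤ // m ≤ N} ⊕ Unit) →* GroupHN N,
      Function.Injective φ ∧
      (∀ m : {m : ℤ // m ≤ N}, φ (FreeGroup.of (Sum.inl m)) = xgN N m) ∧
      φ (FreeGroup.of (Sum.inr ())) = ygN N ⟨N, le_refl N⟩ := by
  set H := Subgroup.normalClosure {g : GroupHN N | ∃ n : ℤ, N < n ∧ g = xgN N n} with hH
  have hinj : Function.Injective (phiHN N) := by
    intro a b hab
    have h1 := DFunLike.congr_fun (retHN_comp_phiHN N) a
    have h2 := DFunLike.congr_fun (retHN_comp_phiHN N) b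
    simp only [MonoidHom.coe_comp, Function.comp_apply, MonoidHom.id_apply] at h1 h2
    rw [← h1, ← h2, hab]
  have hker : ∀ g ∈ H, retHN N g = 1 := by
    have hle : H ≤ (retHN N).ker := by
      rw [hH]
      apply Subgroup.normalClosure_le_normal
      rintro g ⟨n, hn, rfl⟩
      show retHN N (xgN N n) = 1
      rw [xgN, retHN_of]
      simp [retFun, show ¬ n ≤ N by omega]
    exact fun g hg => hle hg
  let π : GroupHN N →* GroupHN N ⧸ H := QuotientGroup.mk' H
  let ρ : GroupHN N ⧸ H →* FreeGroup ({m : ℤ // m ≤ N} ⊕ Unit) :=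
    QuotientGroup.lift H (retHN N) hker
  let σ : FreeGroup ({m : ℤ // m ≤ N} ⊕ Unit) →* GroupHN N ⧸ H := π.comp (phiHN N)
  have hπx : ∀ n : ℤ, N < n → π (xgN N n) = 1 := by
    intro n hn
    exact (QuotientGroup.eq_one_iff _).2 (Subgroup.subset_normalClosure ⟨n, hn, rfl⟩)
  have key : ∀ k : ℕ, π (ygN N ⟨N + k, by omega⟩)
      = (π (ygN N ⟨N, le_refl N⟩)) ^ ((-1 : ℤ) ^ k) := by
    intro k
    induction k with
    | zero =>
      simp only [Nat.cast_zero, add_zero, pow_zero, zpow_one]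
    | succ k ih =>
      have hrel := rel_in_HN N (N + k) (by omega)
      have h1 := congrArg π hrel
      rw [map_mul, map_mul, map_inv, map_inv, hπx (N + k + 1) (by omega), inv_one, one_mul,
        mul_one, ih] at h1
      have h2 : π (ygN N ⟨N + (k : ℤ) + 1, by omega⟩)
          = ((π (ygN N ⟨N, le_refl N⟩)) ^ ((-1 : ℤ) ^ k))⁻¹ := inv_eq_iff_eq_inv.mp h1.symm
      have hc : ygN N ⟨N + ((k + 1 : ℕ) : ℤ), by omega⟩ = ygN N ⟨N + (k : ℤ) + 1, by omega⟩ := by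
        congr 1
        exact Subtype.ext (by push_cast; ring)
      rw [hc, h2, ← zpow_neg]
      congr 1
      rw [pow_succ]
      ring
  have hσρ : σ.comp ρ = MonoidHom.id _ := by
    apply QuotientGroup.monoidHom_ext
    have h0 : (σ.comp ρ).comp (QuotientGroup.mk' H) = σ.comp (retHN N) := by
      ext g
      simp [σ, ρ, π]
      rfl
    rw [h0]
    show σ.comp (retHN N) = π
    apply PresentedGroup.ext
    rintro (m | ⟨n, hn⟩)
    · show σ (retHN N (xgN N m)) = π (xgN N m)
      have h4 : retHN N (xgN N m) = retFun N (Sum.inl m) := retHN_of N (Sum.inl m)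
      rw [h4]
      by_cases hm : m ≤ N
      · simp only [retFun, dif_pos hm]
        show π (phiHN N (FreeGroup.of (Sum.inl ⟨m, hm⟩))) = _
        rw [phiHN_inl]
      · simp only [retFun, dif_neg hm, map_one]
        exact (hπx m (by omega)).symm
    · show σ (retHN N (ygN N ⟨n, hn⟩)) = π (ygN N ⟨n, hn⟩)
      have h4 : retHN N (ygN N ⟨n, hn⟩)
          = (FreeGroup.of (Sum.inr ())) ^ ((-1 : ℤ) ^ (n - N).toNat) :=
        retHN_of N (Sum.inr ⟨n, hn⟩)
      rw [h4, map_zpow]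
      have hσy : σ (FreeGroup.of (Sum.inr ())) = π (ygN N ⟨N, le_refl N⟩) := by
        show π (phiHN N (FreeGroup.of (Sum.inr ()))) = _
        rw [phiHN_inr]
      have hc : ygN N ⟨n, hn⟩ = ygN N ⟨N + ((n - N).toNat : ℤ), by omega⟩ := by
        congr 1
        exact Subtype.ext (by show n = N + ((n - N).toNat : ℤ); omega)
      rw [hσy, hc, key (n - N).toNat]
  have hρσ : ρ.comp σ = MonoidHom.id _ := by
    have h0 : ρ.comp σ = (retHN N).comp (phiHN N) := by
      ext a
      simp [σ, ρ, π]
      rfl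
    rw [h0, retHN_comp_phiHN]
  exact ⟨⟨MonoidHom.toMulEquiv ρ σ hσρ hρσ⟩, phiHN N, hinj, fun m => phiHN_inl N m, phiHN_inr N ()⟩
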